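/- Let E⁰ > 0, let E¹ ∈ ℝ³, and let E² be a real symmetric 3×3 matrix with strictly positive eigenvalues λ₁, λ₂, λ₃ and corresponding orthonormal eigenvectors R₁, R₂, R₃, such that λ₁ + λ₂ + λ₃ = E⁰. Set F_i = E¹·R_i. Then the matrix E⁰ E² − E¹ ⊗ E¹ is positive semidefinite and ‖E¹‖ ≤ E⁰ if and only if F₁²/λ₁ + F₂²/λ₂ + F₃²/λ₃ ≤ E⁰. -/

import Mathlib

open scoped InnerProductSpace

noncomputable section

/-- ℝ³ as a Euclidean space. -/
abbrev E3 := EuclideanSpace ℝ (Fin 3)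

/-- Lemma 3.4 (alternative characterization of realizability): if `E⁰ > 0`,
`E²` is a symmetric 3×3 matrix with positive eigenvalues `λᵢ` (summing to `E⁰`)
and orthonormal eigenvectors `Rᵢ`, and `Fᵢ = E¹·Rᵢ`, then `E⁰E² − E¹⊗E¹` is
positive semidefinite and `‖E¹‖ ≤ E⁰` iff `Σᵢ Fᵢ²/λᵢ ≤ E⁰`. -/
theorem realizability_alternative
    (E0 : ℝ) (hE0 : 0 < E0)
    (E1 : E3)
    (E2 : Matrix (Fin 3) (Fin 3) ℝ) (hE2sym : E2.IsSymm)
    (lam : Fin 3 → ℝ) (hlam_pos : ∀ i, 0 < lam i)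
    (R : Fin 3 → E3) (hR : Orthonormal ℝ R)
    (heig : ∀ i, E2.mulVec (fun a => R i a) = fun a => lam i * R i a)
    (hsum : lam 0 + lam 1 + lam 2 = E0)
    (F : Fin 3 → ℝ) (hF : ∀ i, F i = ⟪E1, R i⟫_ℝ) :
    ((Matrix.of fun a b => E0 * E2 a b - E1 a * E1 b).PosSemidef ∧ ‖E1‖ ≤ E0) ↔
      F 0 ^ 2 / lam 0 + F 1 ^ 2 / lam 1 + F 2 ^ 2 / lam 2 ≤ E0 := by
  open Matrix in
  have hcard : Fintype.card (Fin 3) = Module.finrank ℝ E3 := by simp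
  set b : Module.Basis (Fin 3) ℝ E3 := basisOfOrthonormalOfCardEqFinrank hR hcard with hbdef
  have hb : ⇑b = R := coe_basisOfOrthonormalOfCardEqFinrank hR hcard
  have hbon : Orthonormal ℝ ⇑b := by rw [hb]; exact hR
  set B : OrthonormalBasis (Fin 3) ℝ E3 := b.toOrthonormalBasis hbon with hBdef
  have hB : ⇑B = R := by rw [hBdef, Module.Basis.coe_toOrthonormalBasis, hb]
  -- inner as sum
  have hiR : ∀ (y x : E3), ⟪y, x⟫_ℝ = ∑ a, y a * x a := by
    intro y x; simp [PiLp.inner_apply, RCLike.inner_apply]; exact Finset.sum_congr rfl fun _ _ => mul_comm _ _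
  -- dot product of sums
  have dsum : ∀ (u : Fin 3 → ℝ) (v : Fin 3 → (Fin 3 → ℝ)),
      u ⬝ᵥ (∑ i, v i) = ∑ i, u ⬝ᵥ v i := by
    intro u v
    simp only [dotProduct, Finset.sum_apply, Finset.mul_sum]
    exact Finset.sum_comm
  have sumd : ∀ (u : Fin 3 → ℝ) (v : Fin 3 → (Fin 3 → ℝ)),
      (∑ i, v i) ⬝ᵥ u = ∑ i, v i ⬝ᵥ u := by
    intro u v
    simp only [dotProduct, Finset.sum_apply, Finset.sum_mul]
    exact Finset.sum_comm
  -- c i x as dot product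
  set c : (Fin 3 → ℝ) → Fin 3 → ℝ := fun x i => (fun a => R i a) ⬝ᵥ x with hcdef
  have hc_inner : ∀ (i : Fin 3) (x : E3), c (fun a => x a) i = ⟪R i, x⟫_ℝ := by
    intro i x; rw [hiR]; rfl
  -- decomposition
  have hrepr : ∀ x : Fin 3 → ℝ, x = ∑ i, c x i • (fun a => R i a : Fin 3 → ℝ) := by
    intro x
    have h := B.sum_repr' (WithLp.toLp 2 x : E3)
    rw [hB] at h
    have h3 : (∑ i, c x i • R i : E3) = (WithLp.toLp 2 x : E3) :=
      (Finset.sum_congr rfl fun i _ => by rw [hc_inner i (WithLp.toLp 2 x : E3)]).trans h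
    have h4 := congrArg WithLp.ofLp h3; rw [WithLp.ofLp_sum] at h4; simp only [WithLp.ofLp_smul] at h4; exact h4.symm
  -- orthonormality as dot products
  have hdot : ∀ i j : Fin 3, (fun a => R i a) ⬝ᵥ (fun a => R j a) = if i = j then 1 else 0 := by
    intro i j
    have h := (orthonormal_iff_ite (𝕜 := ℝ)).mp hR i j
    rw [hiR] at h
    exact h
  -- K1
  have hK1 : ∀ (i : Fin 3) (x : Fin 3 → ℝ),
      (fun a => R i a) ⬝ᵥ (E2 *ᵥ x) = lam i * c x i := by
    intro i x
    rw [Matrix.dotProduct_mulVec, ← hE2sym.eq, Matrix.vecMul_transpose, heig i]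
    have h : (fun a => lam i * R i a) = lam i • (fun a => R i a : Fin 3 → ℝ) := rfl
    rw [h, smul_dotProduct]
    rfl
  -- E1 dot R i = F i
  have hFdot : ∀ i, (fun a => E1 a) ⬝ᵥ (fun a => R i a) = F i := by
    intro i; rw [hF, hiR]; rfl
  set M : Matrix (Fin 3) (Fin 3) ℝ := Matrix.of fun a b => E0 * E2 a b - E1 a * E1 b with hMdef
  have hK2 : ∀ x : Fin 3 → ℝ, (fun a => E1 a) ⬝ᵥ x = ∑ i, F i * c x i := by
    intro x
    conv_lhs => rw [hrepr x]
    rw [dsum]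
    exact Finset.sum_congr rfl fun i _ => by
      rw [dotProduct_smul, hFdot]; simp [mul_comm]
  have hKE2 : ∀ x : Fin 3 → ℝ, x ⬝ᵥ (E2 *ᵥ x) = ∑ i, lam i * (c x i)^2 := by
    intro x
    conv_lhs => rw [hrepr x]
    rw [sumd]
    refine Finset.sum_congr rfl fun i _ => ?_
    rw [smul_dotProduct, hK1, ← hrepr x]
    simp only [smul_eq_mul]; ring
  have hMv : ∀ x : Fin 3 → ℝ, M *ᵥ x
      = E0 • (E2 *ᵥ x) - ((fun a => E1 a) ⬝ᵥ x) • (fun a => E1 a) := by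
    intro x
    funext a
    simp only [Matrix.mulVec, hMdef, Matrix.of_apply, dotProduct, Pi.sub_apply,
      Pi.smul_apply, smul_eq_mul, sub_mul, Finset.sum_sub_distrib, Finset.mul_sum,
      Finset.sum_mul]
    congr 1
    · exact Finset.sum_congr rfl fun j _ => by ring
    · exact Finset.sum_congr rfl fun j _ => by ring
  have hq : ∀ x : Fin 3 → ℝ, x ⬝ᵥ (M *ᵥ x)
      = E0 * (∑ i, lam i * (c x i)^2) - (∑ i, F i * c x i)^2 := by
    intro x
    rw [hMv, dotProduct_sub, dotProduct_smul, dotProduct_smul,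
      hKE2, dotProduct_comm x (fun a => E1 a), hK2]
    simp only [smul_eq_mul]; ring
  have hl0 := hlam_pos 0
  have hl1 := hlam_pos 1
  have hl2 := hlam_pos 2
  have hstar : ∀ x : Fin 3 → ℝ, star x = x := fun x => funext fun a => rfl
  constructor
  · rintro ⟨hpsd, -⟩
    set x0 : Fin 3 → ℝ := ∑ j, (F j / lam j) • (fun a => R j a : Fin 3 → ℝ) with hx0
    have hc0 : ∀ i, c x0 i = F i / lam i := by
      intro i
      show (fun a => R i a) ⬝ᵥ x0 = _
      rw [hx0, dsum]
      simp [dotProduct_smul, hdot, Finset.sum_ite_eq]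
    have h := hpsd.dotProduct_mulVec_nonneg x0
    rw [hstar, hq x0, Fin.sum_univ_three, Fin.sum_univ_three,
      hc0 0, hc0 1, hc0 2] at h
    have e1 : ∀ i, lam i * (F i / lam i)^2 = F i^2 / lam i := fun i => by
      field_simp [(hlam_pos i).ne']
    have e2 : ∀ i, F i * (F i / lam i) = F i^2 / lam i := fun i => by
      rw [mul_div_assoc', sq]
    rw [e1 0, e1 1, e1 2, e2 0, e2 1, e2 2] at h
    have hSnn : 0 ≤ F 0 ^ 2 / lam 0 + F 1 ^ 2 / lam 1 + F 2 ^ 2 / lam 2 := by positivity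
    nlinarith [h, hSnn, hE0]
  · intro hS
    have hle0 : lam 0 ≤ E0 := by linarith
    have hle1 : lam 1 ≤ E0 := by linarith
    have hle2 : lam 2 ≤ E0 := by linarith
    have hP : (0:ℝ) < lam 0 * lam 1 * lam 2 := by positivity
    have hS' : F 0^2 * (lam 1 * lam 2) + F 1^2 * (lam 0 * lam 2) + F 2^2 * (lam 0 * lam 1)
        ≤ E0 * (lam 0 * lam 1 * lam 2) := by
      have h := mul_le_mul_of_nonneg_right hS hP.le
      calc F 0^2 * (lam 1 * lam 2) + F 1^2 * (lam 0 * lam 2) + F 2^2 * (lam 0 * lam 1)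
          = (F 0 ^ 2 / lam 0 + F 1 ^ 2 / lam 1 + F 2 ^ 2 / lam 2) * (lam 0 * lam 1 * lam 2) := by
            field_simp
        _ ≤ E0 * (lam 0 * lam 1 * lam 2) := h
    refine ⟨Matrix.PosSemidef.of_dotProduct_mulVec_nonneg ?_ ?_, ?_⟩
    · -- Hermitian
      show Mᴴ = M
      ext a b
      simp only [Matrix.conjTranspose_apply, hMdef, Matrix.of_apply, star_trivial]
      rw [hE2sym.apply a b]
      ring
    · intro x
      rw [hstar, hq x, Fin.sum_univ_three, Fin.sum_univ_three]
      set c0 := c x 0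
      set c1 := c x 1
      set c2 := c x 2
      set T := lam 0 * c0^2 + lam 1 * c1^2 + lam 2 * c2^2 with hTdef
      set X := F 0 * c0 + F 1 * c1 + F 2 * c2 with hXdef
      have hT : (0:ℝ) ≤ T := by rw [hTdef]; positivity
      have key : (lam 0 * lam 1 * lam 2) * (E0 * T - X^2)
          = (E0 * (lam 0 * lam 1 * lam 2)
              - (F 0^2 * (lam 1 * lam 2) + F 1^2 * (lam 0 * lam 2) + F 2^2 * (lam 0 * lam 1))) * T
            + lam 2 * (lam 1 * F 0 * c1 - lam 0 * F 1 * c0)^2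
            + lam 1 * (lam 2 * F 0 * c2 - lam 0 * F 2 * c0)^2
            + lam 0 * (lam 2 * F 1 * c2 - lam 1 * F 2 * c1)^2 := by
        rw [hTdef, hXdef]; ring
      have hrhs : (0:ℝ) ≤ (lam 0 * lam 1 * lam 2) * (E0 * T - X^2) := by
        rw [key]
        have h1 := mul_nonneg (sub_nonneg.mpr hS') hT
        have h2 := mul_nonneg hl2.le (sq_nonneg (lam 1 * F 0 * c1 - lam 0 * F 1 * c0))
        have h3 := mul_nonneg hl1.le (sq_nonneg (lam 2 * F 0 * c2 - lam 0 * F 2 * c0))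
        have h4 := mul_nonneg hl0.le (sq_nonneg (lam 2 * F 1 * c2 - lam 1 * F 2 * c1))
        linarith
      have := (mul_nonneg_iff_of_pos_left hP).mp hrhs
      linarith
    · -- norm bound
      have hcE1 : ∀ i, c (fun a => E1 a) i = F i := by
        intro i
        show (fun a => R i a) ⬝ᵥ (fun a => E1 a) = F i
        rw [dotProduct_comm]
        exact hFdot i
      have hnorm : ‖E1‖^2 = F 0^2 + F 1^2 + F 2^2 := by
        have h1 : ⟪E1, E1⟫_ℝ = (fun a => E1 a) ⬝ᵥ (fun a => E1 a) := by rw [hiR]; rfl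
        rw [← real_inner_self_eq_norm_sq, h1, hK2, Fin.sum_univ_three,
          hcE1 0, hcE1 1, hcE1 2]
        ring
      have hF2 : F 0^2 + F 1^2 + F 2^2 ≤ E0^2 := by
        have h1 := mul_nonneg (sub_nonneg.mpr hle0)
            (mul_nonneg (sq_nonneg (F 0)) (mul_pos hl1 hl2).le)
        have h2 := mul_nonneg (sub_nonneg.mpr hle1)
            (mul_nonneg (sq_nonneg (F 1)) (mul_pos hl0 hl2).le)
        have h3 := mul_nonneg (sub_nonneg.mpr hle2)
            (mul_nonneg (sq_nonneg (F 2)) (mul_pos hl0 hl1).le)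
        have h4 := mul_nonneg hE0.le (sub_nonneg.mpr hS')
        have key2 : (lam 0 * lam 1 * lam 2) * (E0^2 - (F 0^2 + F 1^2 + F 2^2))
            = E0 * (E0 * (lam 0 * lam 1 * lam 2)
                - (F 0^2 * (lam 1 * lam 2) + F 1^2 * (lam 0 * lam 2) + F 2^2 * (lam 0 * lam 1)))
              + (E0 - lam 0) * (F 0^2 * (lam 1 * lam 2))
              + (E0 - lam 1) * (F 1^2 * (lam 0 * lam 2))
              + (E0 - lam 2) * (F 2^2 * (lam 0 * lam 1)) := by ring
        have hrhs2 : (0:ℝ) ≤ (lam 0 * lam 1 * lam 2) * (E0^2 - (F 0^2 + F 1^2 + F 2^2)) := by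
          rw [key2]; linarith
        have := (mul_nonneg_iff_of_pos_left hP).mp hrhs2
        linarith
      have hsq : ‖E1‖^2 ≤ E0^2 := by rw [hnorm]; exact hF2
      exact (pow_le_pow_iff_left₀ (norm_nonneg E1) hE0.le two_ne_zero).mp hsq


end
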